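/- arXiv:2010.11994 — 2 statements merged into one kernel-verified Lean document; each statement's English description precedes it below -/
import Mathlib

section
/- Suppose a matrix Σ₀ ∈ R^{d×d} satisfies the compatibility condition for a set S with |S| = s₀ and compatibility constant φ²(Σ₀,S) > 0, and suppose ‖Σ₀ − Σ₁‖_∞ ≤ λ with 32λs₀/φ²(Σ₀,S) ≤ 1. Then Σ₁ satisfies the compatibility condition for S with φ²(Σ₁,S) ≥ φ²(Σ₀,S)/2. -/
open Matrix BigOperators

/-- The compatibility constant φ²(M, S) with sparsity parameter s₀. -/
noncomputable def compat {d : ℕ} (s₀ : ℕ) (M : Matrix (Fin d) (Fin d) ℝ)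
    (S : Finset (Fin d)) : ℝ :=
  sInf { r | ∃ x : Fin d → ℝ, (∑ i ∈ S, |x i|) ≠ 0 ∧
      (∑ i ∈ Sᶜ, |x i|) ≤ 3 * ∑ i ∈ S, |x i| ∧
      r = (s₀ : ℝ) * (x ⬝ᵥ M.mulVec x) / (∑ i ∈ S, |x i|) ^ 2 }

theorem stmt_4 {d : ℕ} (Sig0 Sig1 : Matrix (Fin d) (Fin d) ℝ) (S : Finset (Fin d)) (s₀ : ℕ)
    (hcard : S.card = s₀) (hφ : 0 < compat s₀ Sig0 S)
    (lam : ℝ) (hnorm : ∀ i j, |Sig0 i j - Sig1 i j| ≤ lam)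
    (hsmall : 32 * lam * s₀ / compat s₀ Sig0 S ≤ 1) :
    compat s₀ Sig0 S / 2 ≤ compat s₀ Sig1 S := by
  classical
  set φ := compat s₀ Sig0 S with hφdef
  set T0 : Set ℝ := { r | ∃ x : Fin d → ℝ, (∑ i ∈ S, |x i|) ≠ 0 ∧
      (∑ i ∈ Sᶜ, |x i|) ≤ 3 * ∑ i ∈ S, |x i| ∧
      r = (s₀ : ℝ) * (x ⬝ᵥ Sig0.mulVec x) / (∑ i ∈ S, |x i|) ^ 2 } with hT0
  set T1 : Set ℝ := { r | ∃ x : Fin d → ℝ, (∑ i ∈ S, |x i|) ≠ 0 ∧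
      (∑ i ∈ Sᶜ, |x i|) ≤ 3 * ∑ i ∈ S, |x i| ∧
      r = (s₀ : ℝ) * (x ⬝ᵥ Sig1.mulVec x) / (∑ i ∈ S, |x i|) ^ 2 } with hT1
  have hc0 : φ = sInf T0 := rfl
  have hc1 : compat s₀ Sig1 S = sInf T1 := rfl
  have hne0 : T0.Nonempty := by
    by_contra h
    rw [Set.not_nonempty_iff_eq_empty] at h
    rw [hc0, h, Real.sInf_empty] at hφ
    exact lt_irrefl 0 hφ
  have hbdd0 : BddBelow T0 := by
    by_contra h
    rw [hc0, Real.sInf_of_not_bddBelow h] at hφ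
    exact lt_irrefl 0 hφ
  have hne1 : T1.Nonempty := by
    obtain ⟨r, x, hx1, hx2, -⟩ := hne0
    exact ⟨_, x, hx1, hx2, rfl⟩
  have h32 : 32 * lam * s₀ ≤ φ := (div_le_one hφ).mp hsmall
  rw [hc1]
  apply le_csInf hne1
  rintro b ⟨x, hxS, hcone, rfl⟩
  set a := ∑ i ∈ S, |x i| with ha
  have ha0 : 0 < a := lt_of_le_of_ne (Finset.sum_nonneg fun i _ => abs_nonneg _) (Ne.symm hxS)
  have hSne : S.Nonempty := by
    by_contra h
    rw [Finset.not_nonempty_iff_eq_empty] at h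
    simp [ha, h] at hxS
  have hlam : 0 ≤ lam := le_trans (abs_nonneg _) (hnorm hSne.choose hSne.choose)
  set L := ∑ i, |x i| with hLdef
  have hLsplit : a + (∑ i ∈ Sᶜ, |x i|) = L := Finset.sum_add_sum_compl S _
  have hL4 : L ≤ 4 * a := by linarith
  have hLnn : 0 ≤ L := Finset.sum_nonneg fun i _ => abs_nonneg _
  -- lower bound from compatibility of Sig0
  have hφle : φ ≤ (s₀ : ℝ) * (x ⬝ᵥ Sig0.mulVec x) / a ^ 2 := by
    rw [hc0]
    exact csInf_le hbdd0 ⟨x, hxS, hcone, rfl⟩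
  have ha2 : (0:ℝ) < a ^ 2 := by positivity
  have h0 : φ * a ^ 2 ≤ (s₀ : ℝ) * (x ⬝ᵥ Sig0.mulVec x) := by
    rw [← le_div_iff₀ ha2]; exact hφle
  -- perturbation bound
  have hq : x ⬝ᵥ Sig0.mulVec x - x ⬝ᵥ Sig1.mulVec x
      = ∑ i, ∑ j, x i * (Sig0 i j - Sig1 i j) * x j := by
    simp only [dotProduct, mulVec, ← Finset.sum_sub_distrib, Finset.mul_sum]
    congr 1; funext i; congr 1; funext j; ring
  have key : x ⬝ᵥ Sig0.mulVec x - x ⬝ᵥ Sig1.mulVec x ≤ lam * L ^ 2 := by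
    rw [hq]
    have hterm : ∀ i j, x i * (Sig0 i j - Sig1 i j) * x j ≤ lam * (|x i| * |x j|) := by
      intro i j
      calc x i * (Sig0 i j - Sig1 i j) * x j ≤ |x i * (Sig0 i j - Sig1 i j) * x j| :=
            le_abs_self _
        _ = |x i| * |Sig0 i j - Sig1 i j| * |x j| := by rw [abs_mul, abs_mul]
        _ ≤ |x i| * lam * |x j| := by
            have := hnorm i j
            have h1 : |x i| * |Sig0 i j - Sig1 i j| ≤ |x i| * lam :=
              mul_le_mul_of_nonneg_left this (abs_nonneg _)
            exact mul_le_mul_of_nonneg_right h1 (abs_nonneg _)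
        _ = lam * (|x i| * |x j|) := by ring
    calc (∑ i, ∑ j, x i * (Sig0 i j - Sig1 i j) * x j)
        ≤ ∑ i, ∑ j, lam * (|x i| * |x j|) :=
          Finset.sum_le_sum fun i _ => Finset.sum_le_sum fun j _ => hterm i j
      _ = lam * L ^ 2 := by
          rw [sq, Finset.sum_mul_sum]
          rw [Finset.mul_sum]
          refine Finset.sum_congr rfl fun i _ => ?_
          rw [Finset.mul_sum]
  have h2 : lam * L ^ 2 ≤ lam * (4 * a) ^ 2 := by
    apply mul_le_mul_of_nonneg_left _ hlam
    exact pow_le_pow_left₀ hLnn hL4 2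
  have hs0nn : (0:ℝ) ≤ (s₀ : ℝ) := Nat.cast_nonneg _
  have h1 : (s₀ : ℝ) * (x ⬝ᵥ Sig0.mulVec x - x ⬝ᵥ Sig1.mulVec x) ≤ (s₀ : ℝ) * (lam * (4*a)^2) :=
    mul_le_mul_of_nonneg_left (key.trans h2) hs0nn
  have h3 : 32 * lam * (s₀:ℝ) * a ^ 2 ≤ φ * a ^ 2 :=
    mul_le_mul_of_nonneg_right h32 ha2.le
  rw [le_div_iff₀ ha2]
  nlinarith [h0, h1, h3]
end

section
/- For any real numbers u, v ≥ 0, 4uv ≤ u² + 4v². Consequently, if 2E + λ‖w‖₁ ≤ 4λ‖w_S‖₁ and ‖w_S‖₁ ≤ √(s₀ wᵀΣ̂w)/φ with E ≥ (1/2)wᵀΣ̂w for a positive semi-definite Σ̂ and constants λ, φ > 0, then ‖w‖₁ ≤ 4λs₀/φ². -/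
open Matrix BigOperators

theorem stmt_18 {d : ℕ} (w : Fin d → ℝ) (S : Finset (Fin d)) (s₀ : ℕ)
    (hcard : S.card ≤ s₀) (Sig : Matrix (Fin d) (Fin d) ℝ) (hSig : Sig.PosSemidef)
    (lam φ E : ℝ) (hlam : 0 < lam) (hφ : 0 < φ)
    (h1 : 2 * E + lam * (∑ i, |w i|) ≤ 4 * lam * ∑ i ∈ S, |w i|)
    (h2 : (∑ i ∈ S, |w i|) ≤ Real.sqrt ((s₀ : ℝ) * (w ⬝ᵥ Sig.mulVec w)) / φ)
    (h3 : (1 / 2) * (w ⬝ᵥ Sig.mulVec w) ≤ E) :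
    (∀ u v : ℝ, 0 ≤ u → 0 ≤ v → 4 * u * v ≤ u ^ 2 + 4 * v ^ 2) ∧
    (∑ i, |w i|) ≤ 4 * lam * s₀ / φ ^ 2 := by
  have key : ∀ u v : ℝ, 0 ≤ u → 0 ≤ v → 4 * u * v ≤ u ^ 2 + 4 * v ^ 2 := by
    intro u v _ _; nlinarith [sq_nonneg (u - 2 * v)]
  refine ⟨key, ?_⟩
  obtain ⟨q, hq⟩ : ∃ q, w ⬝ᵥ Sig.mulVec w = q := ⟨_, rfl⟩
  rw [hq] at h2 h3
  have hq0 : 0 ≤ q := by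
    have := hSig.dotProduct_mulVec_nonneg w
    rw [← hq]; simpa using this
  have hs0 : (0:ℝ) ≤ (s₀ : ℝ) * q := by positivity
  have hsq : Real.sqrt ((s₀:ℝ) * q) = Real.sqrt q * Real.sqrt s₀ := by
    rw [Real.sqrt_mul (by positivity), mul_comm]
  have hu : 0 ≤ Real.sqrt q := Real.sqrt_nonneg _
  have hv : 0 ≤ lam * Real.sqrt s₀ / φ := by positivity
  have hk := key (Real.sqrt q) (lam * Real.sqrt s₀ / φ) hu hv
  have hqs : Real.sqrt q ^ 2 = q := Real.sq_sqrt hq0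
  have hss : Real.sqrt (s₀:ℝ) ^ 2 = (s₀:ℝ) := Real.sq_sqrt (by positivity)
  -- lam * ∑ |w i| ≤ 4 lam * ∑_S |w i| - 2E ≤ 4 lam * sqrt(s₀ q)/φ - q
  have hE : q ≤ 2 * E := by linarith
  have h2' : 4 * lam * (∑ i ∈ S, |w i|) ≤ 4 * lam * (Real.sqrt ((s₀:ℝ)*q) / φ) := by
    apply mul_le_mul_of_nonneg_left h2 (by positivity)
  have hmain : lam * (∑ i, |w i|) ≤ 4 * lam * (Real.sqrt ((s₀:ℝ)*q) / φ) - q := by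
    linarith
  have hfinal : 4 * lam * (Real.sqrt ((s₀:ℝ)*q) / φ) - q ≤ 4 * lam ^ 2 * s₀ / φ ^ 2 := by
    rw [hsq]
    rw [div_pow, mul_pow, hss, hqs] at hk
    have e : 4 * Real.sqrt q * (lam * Real.sqrt s₀ / φ) = 4 * lam * (Real.sqrt q * Real.sqrt s₀ / φ) := by ring
    rw [e] at hk
    have : lam ^ 2 * (Real.sqrt s₀)^2 / φ ^ 2 = lam ^ 2 * s₀ / φ ^ 2 := by rw [hss]
    have hk2 : 4 * lam * (Real.sqrt q * Real.sqrt s₀ / φ) ≤ q + 4 * lam ^ 2 * ↑s₀ / φ ^ 2 := by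
      have e2 : (4:ℝ) * lam ^ 2 * ↑s₀ / φ ^ 2 = 4 * (lam ^ 2 * ↑s₀ / φ ^ 2) := by ring
      rw [e2]; exact hk
    linarith [hk2]
  have : lam * (∑ i, |w i|) ≤ lam * (4 * lam * s₀ / φ ^ 2) := by
    calc lam * (∑ i, |w i|) ≤ 4 * lam ^ 2 * s₀ / φ ^ 2 := le_trans hmain hfinal
    _ = lam * (4 * lam * s₀ / φ ^ 2) := by ring
  exact le_of_mul_le_mul_left this hlam
end
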